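/- Let f = ∏_{i=1}^n (x − ξ_i) ∈ 𝔽_p[x] be squarefree and completely splitting, let q ∈ 𝔽_p[x], and let f_q(x) = ∏_{i=1}^n (x − q(ξ_i)). If g_q is a nontrivial monic factor of f_q (i.e., 1 ≤ deg g_q < deg f_q and g_q ∣ f_q) whose roots are a proper nonempty subset of {q(ξ_i)}, then gcd(g_q(q(x)), f(x)) is a nontrivial factor of f. -/

import Mathlib

open Polynomial

/-- Let `f = ∏ (x - ξ_i)` be squarefree and completely splitting over `𝔽_p`,
`q ∈ 𝔽_p[x]`, and `f_q = ∏ (x - q(ξ_i))`.  If `g_q` is a nontrivial monic factor of `f_q`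
whose roots form a proper nonempty subset of `{q(ξ_i)}`, then `gcd(g_q(q(x)), f)` is a
nontrivial factor of `f`. -/
theorem gcd_comp_nontrivial_factor
    {p : ℕ} [Fact p.Prime] {n : ℕ} (ξ : Fin n → ZMod p) (hinj : Function.Injective ξ)
    (f : Polynomial (ZMod p)) (hf : f = ∏ i, (X - C (ξ i)))
    (q : Polynomial (ZMod p))
    (fq : Polynomial (ZMod p)) (hfq : fq = ∏ i, (X - C (q.eval (ξ i))))
    (gq : Polynomial (ZMod p)) (hmonic : gq.Monic) (hdvd : gq ∣ fq)
    (hdeg : 1 ≤ gq.natDegree) (hdeg' : gq.natDegree < fq.natDegree)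
    (hne : ∃ i, gq.IsRoot (q.eval (ξ i))) (hproper : ∃ j, ¬ gq.IsRoot (q.eval (ξ j))) :
    EuclideanDomain.gcd (gq.comp q) f ∣ f ∧
      0 < (EuclideanDomain.gcd (gq.comp q) f).natDegree ∧
      (EuclideanDomain.gcd (gq.comp q) f).natDegree < f.natDegree := by
  obtain ⟨i, hi⟩ := hne
  obtain ⟨j, hj⟩ := hproper
  set d := EuclideanDomain.gcd (gq.comp q) f with hd
  have hdf : d ∣ f := EuclideanDomain.gcd_dvd_right _ _
  have hdg : d ∣ gq.comp q := EuclideanDomain.gcd_dvd_left _ _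
  have hf0 : f ≠ 0 := by
    rw [hf]
    exact (monic_prod_of_monic _ _ (fun i _ => monic_X_sub_C (ξ i))).ne_zero
  have hd0 : d ≠ 0 := fun h => hf0 (by simpa [h] using hdf)
  -- ξ i is a root of d
  have hroot_f : ∀ k, f.eval (ξ k) = 0 := by
    intro k
    rw [hf, eval_prod]
    exact Finset.prod_eq_zero (Finset.mem_univ k) (by simp)
  have hXd : X - C (ξ i) ∣ d := by
    refine EuclideanDomain.dvd_gcd ?_ ?_
    · rw [dvd_iff_isRoot]
      simpa [IsRoot, eval_comp] using hi
    · rw [dvd_iff_isRoot]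
      exact hroot_f i
  have hpos : 0 < d.natDegree := by
    have := natDegree_le_of_dvd hXd hd0
    have h1 : 1 ≤ d.natDegree := by simpa [natDegree_X_sub_C] using this
    omega
  refine ⟨hdf, hpos, ?_⟩
  -- d.eval (ξ j) ≠ 0
  have hdj : d.eval (ξ j) ≠ 0 := by
    intro h0
    apply hj
    obtain ⟨k, hk⟩ := hdg
    have : (gq.comp q).eval (ξ j) = 0 := by rw [hk, eval_mul, h0, zero_mul]
    simpa [IsRoot, eval_comp] using this
  have hle : d.natDegree ≤ f.natDegree := natDegree_le_of_dvd hdf hf0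
  rcases lt_or_eq_of_le hle with h | h
  · exact h
  exfalso
  obtain ⟨k, hk⟩ := hdf
  have hk0 : k ≠ 0 := fun hh => hf0 (by simp [hk, hh])
  have hdeg_eq : f.natDegree = d.natDegree + k.natDegree := by
    rw [hk, natDegree_mul hd0 hk0]
  have hkdeg : k.natDegree = 0 := by omega
  have hkC : k = C (k.coeff 0) := eq_C_of_natDegree_eq_zero hkdeg
  have : f.eval (ξ j) = d.eval (ξ j) * k.coeff 0 := by
    rw [hk, eval_mul]
    conv_lhs => rw [hkC]
    simp
  rw [hroot_f j] at this
  rcases mul_eq_zero.mp this.symm with h1 | h1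
  · exact hdj h1
  · exact hk0 (by rw [hkC, h1, map_zero])
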